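/- arXiv:cs/0412098 — 3 statements merged into one kernel-verified Lean document; each statement's English description precedes it below -/
import Mathlib

section
/- NGD violates the triangle inequality: let N > 1 be a real number and set f(x) = f(y) = f(x,z) = f(y,z) = √N, f(z) = 2√N, and f(x,y) arbitrarily small (in the limit f(x,y) → 0 the distance NGD(x,y) → ∞). Then NGD(x,z) = NGD(z,y) = 2/log N (computing NGD(x,z) = (log f(z) − log f(x,z))/(log N − log f(x,z)) with the convention that the max/min are taken over {f(x), f(z)}), so for every N > 1 and every finite bound B there is a choice of f(x,y) making NGD(x,y) > NGD(x,z) + NGD(z,y) = 4/log N, violating the triangle inequality. -/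
/-- `NGD` violates the triangle inequality: with `f(x)=f(y)=f(x,z)=f(y,z)=√N`
and `f(z)=2√N` (base-2 logarithms), `NGD(x,z) = NGD(z,y) = 2/log₂ N`, and
`f(x,y)` can be chosen to make `NGD(x,y)` exceed any bound `B`, in particular
exceeding `NGD(x,z) + NGD(z,y) = 4/log₂ N`. -/
theorem ngd_triangle_violation (N : ℝ) (hN : 1 < N) (B : ℝ) :
    let NGD : ℝ → ℝ → ℝ → ℝ := fun a b ab =>
      (max (Real.logb 2 a) (Real.logb 2 b) - Real.logb 2 ab) /
        (Real.logb 2 N - min (Real.logb 2 a) (Real.logb 2 b))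
    NGD (Real.sqrt N) (2 * Real.sqrt N) (Real.sqrt N) = 2 / Real.logb 2 N ∧
    NGD (Real.sqrt N) (2 * Real.sqrt N) (Real.sqrt N) +
        NGD (2 * Real.sqrt N) (Real.sqrt N) (Real.sqrt N) = 4 / Real.logb 2 N ∧
    ∃ fxy : ℝ, 0 < fxy ∧
      NGD (Real.sqrt N) (Real.sqrt N) fxy > B ∧
      NGD (Real.sqrt N) (Real.sqrt N) fxy >
        NGD (Real.sqrt N) (2 * Real.sqrt N) (Real.sqrt N) +
          NGD (2 * Real.sqrt N) (Real.sqrt N) (Real.sqrt N) := by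
  intro NGD
  have hN0 : (0:ℝ) < N := lt_trans one_pos hN
  have hL : 0 < Real.logb 2 N := Real.logb_pos (by norm_num) hN
  set L := Real.logb 2 N with hLdef
  have hsqrt : Real.logb 2 (Real.sqrt N) = L / 2 := by
    rw [Real.logb, Real.log_sqrt hN0.le, hLdef, Real.logb]
    ring
  have hsqrt_pos : (0:ℝ) < Real.sqrt N := Real.sqrt_pos.mpr hN0
  have h2sqrt : Real.logb 2 (2 * Real.sqrt N) = 1 + L / 2 := by
    rw [Real.logb_mul (by norm_num) (ne_of_gt hsqrt_pos), hsqrt]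
    norm_num [Real.logb_self_eq_one]
  have hmax : max (L / 2) (1 + L / 2) = 1 + L / 2 := by
    apply max_eq_right; linarith
  have hmin : min (L / 2) (1 + L / 2) = L / 2 := by
    apply min_eq_left; linarith
  have hmax' : max (1 + L / 2) (L / 2) = 1 + L / 2 := by
    apply max_eq_left; linarith
  have hmin' : min (1 + L / 2) (L / 2) = L / 2 := by
    apply min_eq_right; linarith
  have hxz : NGD (Real.sqrt N) (2 * Real.sqrt N) (Real.sqrt N) = 2 / L := by
    show (max (Real.logb 2 (Real.sqrt N)) (Real.logb 2 (2 * Real.sqrt N)) -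
        Real.logb 2 (Real.sqrt N)) /
        (L - min (Real.logb 2 (Real.sqrt N)) (Real.logb 2 (2 * Real.sqrt N))) = 2 / L
    rw [hsqrt, h2sqrt, hmax, hmin,
      show (1 + L / 2 - L / 2) = 1 by ring, show (L - L / 2) = L / 2 by ring,
      div_eq_div_iff (by linarith) hL.ne']
    ring
  have hzy : NGD (2 * Real.sqrt N) (Real.sqrt N) (Real.sqrt N) = 2 / L := by
    show (max (Real.logb 2 (2 * Real.sqrt N)) (Real.logb 2 (Real.sqrt N)) -
        Real.logb 2 (Real.sqrt N)) /
        (L - min (Real.logb 2 (2 * Real.sqrt N)) (Real.logb 2 (Real.sqrt N))) = 2 / L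
    rw [hsqrt, h2sqrt, hmax', hmin',
      show (1 + L / 2 - L / 2) = 1 by ring, show (L - L / 2) = L / 2 by ring,
      div_eq_div_iff (by linarith) hL.ne']
    ring
  refine ⟨hxz, by rw [hxz, hzy]; ring, ?_⟩
  -- choose fxy = 2 ^ t with t = L/2 - M * (L/2), M = max B (4/L) + 1
  set M : ℝ := max B (4 / L) + 1 with hM
  set t : ℝ := L / 2 - M * (L / 2) with ht
  refine ⟨(2:ℝ) ^ t, Real.rpow_pos_of_pos (by norm_num) t, ?_, ?_⟩
  all_goals {
    have hlogt : Real.logb 2 ((2:ℝ) ^ t) = t := Real.logb_rpow (by norm_num) (by norm_num)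
    have hNGDxy : NGD (Real.sqrt N) (Real.sqrt N) ((2:ℝ) ^ t) = M := by
      show (max (Real.logb 2 (Real.sqrt N)) (Real.logb 2 (Real.sqrt N)) -
          Real.logb 2 ((2:ℝ) ^ t)) /
          (L - min (Real.logb 2 (Real.sqrt N)) (Real.logb 2 (Real.sqrt N))) = M
      rw [hsqrt, hlogt, max_self, min_self, ht,
        show (L / 2 - (L / 2 - M * (L / 2))) = M * (L / 2) by ring,
        show (L - L / 2) = L / 2 by ring, mul_div_assoc,
        div_self (by linarith : L / 2 ≠ 0), mul_one]
    rw [hNGDxy]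
    first
    | (rw [hM]; linarith [le_max_left B (4 / L)])
    | (rw [hxz, hzy, show 2 / L + 2 / L = 4 / L by ring, hM]
       linarith [le_max_right B (4 / L)])
  }
end

section
/- The information distance E(x,y) = K(x,y) − min{K(x), K(y)} (with K an arbitrary nonnegative real-valued function on strings and pairs satisfying symmetry K(x,y) = K(y,x) and subadditivity K(x,y) ≤ K(x,z) + K(z,y) − K(z) for all x,y,z, together with K(x,x) = K(x) and K(x,y) ≥ max{K(x),K(y)}) satisfies: E(x,x) = 0, E(x,y) = E(y,x), E(x,y) ≥ 0, and E(x,y) ≤ E(x,z) + E(z,y). -/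
/-- The information distance `E(x,y) = K(x,y) − min{K(x),K(y)}` is a metric
up to identity of indiscernibles, given the abstract axioms on `K`. -/
theorem information_distance_metric
    {α : Type*} (K : α → ℝ) (K2 : α → α → ℝ)
    (hK0 : ∀ x, 0 ≤ K x) (hK20 : ∀ x y, 0 ≤ K2 x y)
    (hdiag : ∀ x, K2 x x = K x)
    (hsym : ∀ x y, K2 x y = K2 y x)
    (hmax : ∀ x y, max (K x) (K y) ≤ K2 x y)
    (hsub : ∀ x y z, K2 x y + K z ≤ K2 x z + K2 z y) :
    (∀ x, K2 x x - min (K x) (K x) = 0) ∧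
    (∀ x y, K2 x y - min (K x) (K y) = K2 y x - min (K y) (K x)) ∧
    (∀ x y, 0 ≤ K2 x y - min (K x) (K y)) ∧
    (∀ x y z, K2 x y - min (K x) (K y) ≤
      (K2 x z - min (K x) (K z)) + (K2 z y - min (K z) (K y))) := by
  refine ⟨fun x => by simp [hdiag], fun x y => by rw [hsym, min_comm], ?_, ?_⟩
  · intro x y
    have h1 : min (K x) (K y) ≤ max (K x) (K y) := min_le_max
    have h2 := hmax x y
    linarith
  · intro x y z
    have h := hsub x y z
    have h1 := min_le_left (K x) (K z)
    have h2 := min_le_left (K z) (K y)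
    have h3 := min_le_right (K z) (K y)
    have h4 := min_le_right (K x) (K z)
    rcases min_cases (K x) (K y) with ⟨he, _⟩ | ⟨he, _⟩ <;> linarith
end

section
/- Upper bound on NGD via individual distances (Theorem 2 arithmetic core): suppose G(x,y) ≤ G_i(x,y) + log(N/N_i), G_i(x) − log(2k) ≤ G(x), and G_i(y) − log(2k) ≤ G(y), with max{G(x), G(y)} > 0 and max{G_i(x), G_i(y)} > 0 and G_i(x,y) ≥ max{G_i(x), G_i(y)} ≥ min{G_i(x),G_i(y)} ≥ 0. Then NGD(x,y) ≤ β·NGD_i(x,y) + γ where NGD(x,y) = (G(x,y) − min{G(x),G(y)})/max{G(x),G(y)}, NGD_i is the analogous expression in G_i, β = max{G_i(x),G_i(y)}/max{G(x),G(y)}, and γ = (min{G_i(x),G_i(y)} − min{G(x),G(y)} + log(N/N_i))/max{G(x),G(y)}. -/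
/-- Arithmetic core of the universality theorem for `NGD`:
`NGD(x,y) ≤ β·NGD_i(x,y) + γ`. -/
theorem ngd_universality_core
    (Gxy Gx Gy Gixy Gix Giy N Ni k : ℝ)
    (hNi : 0 < Ni) (hNNi : Ni ≤ N) (hk : 1 ≤ k)
    (h1 : Gxy ≤ Gixy + Real.log (N / Ni))
    (h2 : Gix - Real.log (2 * k) ≤ Gx)
    (h3 : Giy - Real.log (2 * k) ≤ Gy)
    (hmax : 0 < max Gx Gy) (himax : 0 < max Gix Giy)
    (hGi : max Gix Giy ≤ Gixy) (hmin : 0 ≤ min Gix Giy) :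
    (Gxy - min Gx Gy) / max Gx Gy ≤
      (max Gix Giy / max Gx Gy) * ((Gixy - min Gix Giy) / max Gix Giy) +
        (min Gix Giy - min Gx Gy + Real.log (N / Ni)) / max Gx Gy := by
  have hne : max Gix Giy ≠ 0 := ne_of_gt himax
  have heq : max Gix Giy / max Gx Gy * ((Gixy - min Gix Giy) / max Gix Giy)
      = (Gixy - min Gix Giy) / max Gx Gy := by
    field_simp
  rw [heq, ← add_div]
  exact div_le_div_of_nonneg_right (by linarith) hmax.le
end
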